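/- Triviality of the Δ-vector is monotone: let T be a finite sequence of first-order terms. If Δ(T) = (α, T) (i.e. the Δ-vector of T is trivial), then Δ(T′) = (α, T′) for every finite sequence of terms T′ that contains all terms of T. -/

import Mathlib

namespace DeltaVec

/-- First-order terms over head symbols `F`, together with the single fresh
variable `α` (the constructor `var`). -/
inductive Tm (F : Type) : Type where
  | var : Tm F
  | node : F → List (Tm F) → Tm F

namespace Tm

variable {F : Type}

/-- A ground term: one built only from function symbols (no occurrence of `α`). -/
inductive Ground : Tm F → Prop
  | node (f : F) (ts : List (Tm F)) : (∀ t ∈ ts, Ground t) → Ground (node f ts)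

/-- The depth of a term. -/
def depth : Tm F → ℕ
  | var => 0
  | node _ ts => (ts.attach.map (fun x => depth x.1)).foldr max 0 + 1
decreasing_by
  have := List.sizeOf_lt_of_mem x.2
  simp only [Tm.node.sizeOf_spec]
  omega

end Tm

end DeltaVec

namespace DeltaVec
open scoped Classical

variable {F : Type}

/-- Fuel-indexed computation of the Δ-vector.  The second component `none` means
"unconstrained" (which occurs exactly when all input terms are equal, so that the
variable `α` does not occur in the first component). -/
noncomputable def deltaAux : ℕ → List (Tm F) → Tm F × Option (List (Tm F))
  | 0, ts => (Tm.var, some ts)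
  | d + 1, ts =>
    if ts = [] then (Tm.var, some ts)
    else if ∀ x ∈ ts, x = ts.headD Tm.var then (ts.headD Tm.var, none)
    else if h : ∃ r : F × List (List (Tm F)) × ℕ × List (Tm F) × List (Tm F),
        ts = r.2.1.map (Tm.node r.1) ∧
        (∀ a ∈ r.2.1, a.length = r.2.2.1) ∧
        r.2.2.2.1.length = r.2.2.1 ∧
        (∀ j < r.2.2.1,
          deltaAux d (r.2.1.map (fun a => a.getD j Tm.var)) =
            (r.2.2.2.1.getD j Tm.var, none) ∨
          deltaAux d (r.2.1.map (fun a => a.getD j Tm.var)) =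
            (r.2.2.2.1.getD j Tm.var, some r.2.2.2.2)) then
      (Tm.node h.choose.1 h.choose.2.2.2.1, some h.choose.2.2.2.2)
    else (Tm.var, some ts)

/-- The Δ-vector of a sequence of terms (the fuel `max depth + 1` suffices for the
recursion of the definition). -/
noncomputable def delta (ts : List (Tm F)) : Tm F × Option (List (Tm F)) :=
  deltaAux ((ts.map Tm.depth).foldr max 0 + 1) ts

end DeltaVec

namespace DeltaVec
open scoped Classical

variable {F : Type}

def Tm.args : Tm F → List (Tm F)
  | .var => []
  | .node _ a => a

/-- the `j`-th argument of a term (or `var` if out of range). -/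
def arg (j : ℕ) (t : Tm F) : Tm F := (Tm.args t).getD j Tm.var

def maxD (l : List (Tm F)) : ℕ := (l.map Tm.depth).foldr max 0

abbrev AE (l : List (Tm F)) : Prop := ∀ x ∈ l, x = l.headD Tm.var

abbrev CondAt (d : ℕ) (ts : List (Tm F))
    (r : F × List (List (Tm F)) × ℕ × List (Tm F) × List (Tm F)) : Prop :=
  ts = r.2.1.map (Tm.node r.1) ∧
  (∀ a ∈ r.2.1, a.length = r.2.2.1) ∧
  r.2.2.2.1.length = r.2.2.1 ∧
  (∀ j < r.2.2.1,
    deltaAux d (r.2.1.map (fun a => a.getD j Tm.var)) =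
      (r.2.2.2.1.getD j Tm.var, none) ∨
    deltaAux d (r.2.1.map (fun a => a.getD j Tm.var)) =
      (r.2.2.2.1.getD j Tm.var, some r.2.2.2.2))

abbrev Cond (d : ℕ) (ts : List (Tm F)) : Prop := ∃ r, CondAt d ts r

lemma deltaAux_AE (d : ℕ) (ts : List (Tm F)) (h1 : ts ≠ []) (h2 : AE ts) :
    deltaAux (d+1) ts = (ts.headD Tm.var, none) := by
  simp only [deltaAux]
  rw [if_neg h1, if_pos h2]

lemma deltaAux_cond (d : ℕ) (ts : List (Tm F)) (h1 : ts ≠ []) (h2 : ¬ AE ts)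
    (h : Cond d ts) :
    deltaAux (d+1) ts = (Tm.node h.choose.1 h.choose.2.2.2.1, some h.choose.2.2.2.2) := by
  simp only [deltaAux]
  rw [if_neg h1, if_neg h2, dif_pos h]

lemma deltaAux_triv (d : ℕ) (ts : List (Tm F)) (h1 : ts ≠ []) (h2 : ¬ AE ts)
    (h : ¬ Cond d ts) :
    deltaAux (d+1) ts = (Tm.var, some ts) := by
  simp only [deltaAux]
  rw [if_neg h1, if_neg h2, dif_neg h]

end DeltaVec

namespace DeltaVec
open scoped Classical

variable {F : Type}

lemma headD_mem {l : List (Tm F)} (h : l ≠ []) : l.headD Tm.var ∈ l := by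
  cases l with
  | nil => exact absurd rfl h
  | cons a l => exact List.mem_cons_self

lemma map_pointwise {α β : Type*} {l : List α} {f g : α → β}
    (h : l.map f = l.map g) : ∀ x ∈ l, f x = g x := by
  induction l with
  | nil => intro x hx; cases hx
  | cons a l ih =>
    simp only [List.map_cons, List.cons.injEq] at h
    intro x hx
    rcases List.mem_cons.1 hx with rfl | hx
    · exact h.1
    · exact ih h.2 x hx

lemma le_foldr_max {l : List ℕ} {x : ℕ} (h : x ∈ l) : x ≤ l.foldr max 0 := by
  induction l with
  | nil => cases h
  | cons a l ih =>
    rcases List.mem_cons.1 h with rfl | h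
    · exact le_max_left _ _
    · exact le_trans (ih h) (le_max_right _ _)

lemma depth_node (f : F) (a : List (Tm F)) :
    Tm.depth (Tm.node f a) = (a.map Tm.depth).foldr max 0 + 1 := by
  rw [Tm.depth]
  congr 1
  rw [List.attach_map_val (f := Tm.depth)]

lemma depth_arg_lt (j : ℕ) (f : F) (a : List (Tm F)) :
    Tm.depth (arg j (Tm.node f a)) < Tm.depth (Tm.node f a) := by
  rw [depth_node]
  show Tm.depth (a.getD j Tm.var) < _
  by_cases hj : j < a.length
  · rw [List.getD_eq_getElem a Tm.var hj]
    have : Tm.depth a[j] ≤ (a.map Tm.depth).foldr max 0 :=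
      le_foldr_max (List.mem_map_of_mem (f := Tm.depth) (a.getElem_mem hj))
    omega
  · rw [List.getD_eq_default a Tm.var (le_of_not_gt hj)]
    rw [show Tm.depth (Tm.var : Tm F) = 0 from by rw [Tm.depth]]
    omega

lemma le_maxD {l : List (Tm F)} {t : Tm F} (h : t ∈ l) : t.depth ≤ maxD l :=
  le_foldr_max (List.mem_map_of_mem (f := Tm.depth) h)

lemma maxD_lt {l : List (Tm F)} {K : ℕ} (h0 : 0 < K)
    (h : ∀ x ∈ l, Tm.depth x < K) : maxD l < K := by
  induction l with
  | nil => exact h0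
  | cons a l ih =>
    have : maxD (a :: l) = max a.depth (maxD l) := rfl
    rw [this]
    exact max_lt (h a List.mem_cons_self) (ih (fun x hx => h x (List.mem_cons_of_mem a hx)))

lemma one_le_maxD {l : List (Tm F)} {f : F} {a : List (Tm F)}
    (h : Tm.node f a ∈ l) : 1 ≤ maxD l := by
  have := le_maxD h
  rw [depth_node] at this
  omega

lemma AE_sub {ts ts' : List (Tm F)} (h' : AE ts') (hsub : ∀ t ∈ ts, t ∈ ts')
    (hne : ts ≠ []) : AE ts := by
  intro x hx
  rw [h' x (hsub x hx), h' _ (hsub _ (headD_mem hne))]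

lemma AE_of_snd_none : ∀ (d : ℕ) (ts : List (Tm F)), ts ≠ [] →
    (deltaAux d ts).2 = none → AE ts := by
  intro d ts h1 h2
  cases d with
  | zero => simp [deltaAux] at h2
  | succ d =>
    by_cases hae : AE ts
    · exact hae
    by_cases hc : Cond d ts
    · rw [deltaAux_cond d ts h1 hae hc] at h2; simp at h2
    · rw [deltaAux_triv d ts h1 hae hc] at h2; simp at h2

lemma snd_some_of_not_AE {d : ℕ} {ts : List (Tm F)} (h1 : ts ≠ []) (h2 : ¬ AE ts) :
    ∃ s, (deltaAux d ts).2 = some s := by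
  cases hs : (deltaAux d ts).2 with
  | none =>
    cases d with
    | zero => simp [deltaAux] at hs
    | succ d => exact absurd (AE_of_snd_none _ _ h1 hs) h2
  | some s => exact ⟨s, rfl⟩

lemma Ground.args_ground {f : F} {a : List (Tm F)} (h : Tm.Ground (Tm.node f a)) :
    ∀ x ∈ a, Tm.Ground x := by
  cases h with
  | node _ _ h => exact h

lemma Ground.exists_node {t : Tm F} (h : Tm.Ground t) :
    ∃ f a, t = Tm.node f a := by
  cases h with
  | node f a _ => exact ⟨f, a, rfl⟩

end DeltaVec

namespace DeltaVec
open scoped Classical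

variable {F : Type}

lemma map_ne_nil {α β : Type*} {l : List α} (h : l ≠ []) (g : α → β) :
    l.map g ≠ [] := by
  cases l with
  | nil => exact absurd rfl h
  | cons a l => simp

lemma headD_map {l : List (Tm F)} (g : Tm F → Tm F) (h : l ≠ []) :
    (l.map g).headD Tm.var = g (l.headD Tm.var) := by
  cases l with
  | nil => exact absurd rfl h
  | cons a l => rfl

lemma mem_decomp {ts : List (Tm F)} {lists : List (List (Tm F))} {f : F} {x : Tm F}
    (hts : ts = lists.map (Tm.node f)) (hx : x ∈ ts) :
    ∃ a, a ∈ lists ∧ x = Tm.node f a := by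
  subst hts
  obtain ⟨a, ha, h⟩ := List.mem_map.1 hx
  exact ⟨a, ha, h.symm⟩

lemma col_eq {ts : List (Tm F)} {lists : List (List (Tm F))} {f : F}
    (hts : ts = lists.map (Tm.node f)) (j : ℕ) :
    lists.map (fun a => a.getD j Tm.var) = ts.map (arg j) := by
  subst hts
  rw [List.map_map]
  rfl

lemma maxD_col {ts : List (Tm F)} {lists : List (List (Tm F))} {f : F}
    (hts : ts = lists.map (Tm.node f)) (hne : ts ≠ []) (j : ℕ) :
    maxD (ts.map (arg j)) + 1 ≤ maxD ts := by
  have h0 : 0 < maxD ts := by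
    obtain ⟨a, _, ha⟩ := mem_decomp hts (headD_mem hne)
    exact one_le_maxD (ha ▸ headD_mem hne)
  have : maxD (ts.map (arg j)) < maxD ts := by
    apply maxD_lt h0
    intro x hx
    obtain ⟨t, ht, rfl⟩ := List.mem_map.1 hx
    obtain ⟨a, _, rfl⟩ := mem_decomp hts ht
    exact lt_of_lt_of_le (depth_arg_lt _ _ _) (le_maxD (hts ▸ ht))
  omega

lemma decomp {ts ts' : List (Tm F)} {lists' : List (List (Tm F))} {f : F} {m : ℕ}
    (hsub : ∀ t ∈ ts, t ∈ ts') (hts' : ts' = lists'.map (Tm.node f))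
    (hlen : ∀ a ∈ lists', a.length = m) :
    ts = (ts.map Tm.args).map (Tm.node f) ∧
      ∀ aa ∈ ts.map Tm.args, aa.length = m := by
  have key : ∀ t ∈ ts, Tm.node f (Tm.args t) = t ∧ (Tm.args t).length = m := by
    intro t ht
    obtain ⟨a, ha, rfl⟩ := mem_decomp hts' (hsub t ht)
    exact ⟨rfl, hlen a ha⟩
  constructor
  · rw [List.map_map]
    conv_lhs => rw [← List.map_id ts]
    exact (List.map_congr_left (fun t ht => (key t ht).1)).symm
  · intro aa haa
    obtain ⟨t, ht, rfl⟩ := List.mem_map.1 haa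
    exact (key t ht).2

lemma exists_nc_col {ts : List (Tm F)} {lists : List (List (Tm F))} {f : F} {m : ℕ}
    (hne : ts ≠ []) (hts : ts = lists.map (Tm.node f))
    (hlen : ∀ a ∈ lists, a.length = m) (hnae : ¬ AE ts) :
    ∃ j, j < m ∧ ¬ AE (ts.map (arg j)) := by
  by_contra hcon
  push_neg at hcon
  apply hnae
  intro x hx
  have hh := headD_mem hne
  obtain ⟨ax, hax, hx'⟩ := mem_decomp hts hx
  obtain ⟨ah, hah, hh'⟩ := mem_decomp hts hh
  have hlx : ax.length = m := hlen _ hax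
  have hlh : ah.length = m := hlen _ hah
  have : ax = ah := by
    apply List.ext_getElem (by omega)
    intro i hi1 hi2
    have him : i < m := by omega
    have hae := hcon i him
    have e1 : arg i x = (ts.map (arg i)).headD Tm.var :=
      hae _ (List.mem_map_of_mem hx)
    rw [headD_map _ hne] at e1
    have e2 : arg i x = ax.getD i Tm.var := by rw [hx']; rfl
    have e3 : arg i (ts.headD Tm.var) = ah.getD i Tm.var := by rw [hh']; rfl
    rw [List.getD_eq_getElem _ _ hi1] at e2
    rw [List.getD_eq_getElem _ _ hi2] at e3
    rw [← e2, e1, e3]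
  rw [hx', hh', this]

lemma condAt_eq {d : ℕ} {ts : List (Tm F)} {r₁ r₂ : F × List (List (Tm F)) × ℕ × List (Tm F) × List (Tm F)}
    (hne : ts ≠ []) (hnae : ¬ AE ts)
    (h1 : CondAt d ts r₁) (h2 : CondAt d ts r₂) :
    r₁.1 = r₂.1 ∧ r₁.2.2.2.1 = r₂.2.2.2.1 ∧ r₁.2.2.2.2 = r₂.2.2.2.2 := by
  obtain ⟨hts1, hlen1, hu1, hcond1⟩ := h1
  obtain ⟨hts2, hlen2, hu2, hcond2⟩ := h2
  -- heads agree
  have hh := headD_mem hne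
  obtain ⟨a1, ha1, he1⟩ := mem_decomp hts1 hh
  obtain ⟨a2, ha2, he2⟩ := mem_decomp hts2 hh
  have hf : r₁.1 = r₂.1 := by
    rw [he2] at he1
    injection he1 with h1 _
    exact h1.symm
  -- lists agree
  have hinj : Function.Injective (Tm.node r₁.1 : List (Tm F) → Tm F) := by
    intro a b hab; injection hab
  have hl : r₁.2.1 = r₂.2.1 := by
    apply List.map_injective_iff.mpr hinj
    rw [← hts1, hts2, ← hf]
  -- arities agree
  have hm : r₁.2.2.1 = r₂.2.2.1 :=
    (hlen1 a1 ha1).symm.trans (hlen2 a1 (hl ▸ ha1))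
  -- the second components agree
  have hs : r₁.2.2.2.2 = r₂.2.2.2.2 := by
    obtain ⟨j0, hj0, hnc⟩ := exists_nc_col hne hts1 hlen1 hnae
    have hcne : ts.map (arg j0) ≠ [] := map_ne_nil hne _
    have hc1 := hcond1 j0 hj0
    have hc2 := hcond2 j0 (hm ▸ hj0)
    rw [col_eq hts1 j0] at hc1
    rw [col_eq hts2 j0] at hc2
    rcases hc1 with hc1 | hc1
    · exact absurd (AE_of_snd_none d _ hcne (by rw [hc1])) hnc
    rcases hc2 with hc2 | hc2
    · exact absurd (AE_of_snd_none d _ hcne (by rw [hc2])) hnc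
    · have := (congrArg Prod.snd hc1).symm.trans (congrArg Prod.snd hc2)
      injection this
  -- the first components agree
  have hu : r₁.2.2.2.1 = r₂.2.2.2.1 := by
    apply List.ext_getElem (by rw [hu1, hu2, hm])
    intro i hi1 hi2
    have him1 : i < r₁.2.2.1 := by omega
    have him2 : i < r₂.2.2.1 := by omega
    have e1 : (deltaAux d (r₁.2.1.map (fun a => a.getD i Tm.var))).1
        = r₁.2.2.2.1.getD i Tm.var := by
      rcases hcond1 i him1 with h | h <;> rw [h]
    have e2 : (deltaAux d (r₂.2.1.map (fun a => a.getD i Tm.var))).1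
        = r₂.2.2.2.1.getD i Tm.var := by
      rcases hcond2 i him2 with h | h <;> rw [h]
    rw [← List.getD_eq_getElem _ Tm.var hi1, ← List.getD_eq_getElem _ Tm.var hi2,
      ← e1, ← e2, hl]
  exact ⟨hf, hu, hs⟩

end DeltaVec

namespace DeltaVec
open scoped Classical

variable {F : Type}

lemma deltaAux_nil (d : ℕ) : deltaAux d ([] : List (Tm F)) = (Tm.var, some []) := by
  cases d <;> simp [deltaAux]

lemma deltaAux_fuel : ∀ d e (ts : List (Tm F)), maxD ts + 1 ≤ d → maxD ts + 1 ≤ e →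
    deltaAux d ts = deltaAux e ts := by
  intro d
  induction d using Nat.strong_induction_on with
  | _ d ih =>
    intro e ts hd he
    obtain ⟨d₁, rfl⟩ : ∃ d₁, d = d₁ + 1 := ⟨d - 1, by omega⟩
    obtain ⟨e₁, rfl⟩ : ∃ e₁, e = e₁ + 1 := ⟨e - 1, by omega⟩
    by_cases hne : ts = []
    · subst hne; rw [deltaAux_nil, deltaAux_nil]
    by_cases hae : AE ts
    · rw [deltaAux_AE _ _ hne hae, deltaAux_AE _ _ hne hae]
    have colEq : ∀ (r : F × List (List (Tm F)) × ℕ × List (Tm F) × List (Tm F)),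
        ts = r.2.1.map (Tm.node r.1) → ∀ j,
        deltaAux d₁ (r.2.1.map (fun a => a.getD j Tm.var)) =
          deltaAux e₁ (r.2.1.map (fun a => a.getD j Tm.var)) := by
      intro r hts j
      rw [col_eq hts j]
      have hcol := maxD_col hts hne j
      exact ih d₁ (by omega) e₁ _ (by omega) (by omega)
    have swap1 : ∀ r, CondAt d₁ ts r → CondAt e₁ ts r := by
      intro r ⟨hts, hlen, hu, hcond⟩
      refine ⟨hts, hlen, hu, fun j hj => ?_⟩
      rw [← colEq r hts j]
      exact hcond j hj
    have swap2 : ∀ r, CondAt e₁ ts r → CondAt d₁ ts r := by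
      intro r ⟨hts, hlen, hu, hcond⟩
      refine ⟨hts, hlen, hu, fun j hj => ?_⟩
      rw [colEq r hts j]
      exact hcond j hj
    by_cases hc : Cond d₁ ts
    · have hc' : Cond e₁ ts := by
        obtain ⟨r, hr⟩ := hc; exact ⟨r, swap1 r hr⟩
      rw [deltaAux_cond _ _ hne hae hc, deltaAux_cond _ _ hne hae hc']
      obtain ⟨hf, hu, hs⟩ := condAt_eq hne hae hc.choose_spec (swap2 _ hc'.choose_spec)
      rw [hf, hu, hs]
    · have hc' : ¬ Cond e₁ ts := by
        rintro ⟨r, hr⟩; exact hc ⟨r, swap2 r hr⟩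
      rw [deltaAux_triv _ _ hne hae hc, deltaAux_triv _ _ hne hae hc']

end DeltaVec

namespace DeltaVec
open scoped Classical

variable {F : Type}

lemma snd_map : ∀ d (ts : List (Tm F)) (s : List (Tm F)), (deltaAux d ts).2 = some s →
    ∃ g : Tm F → Tm F, s = ts.map g ∧ (∀ t ∈ ts, (g t).depth ≤ t.depth) ∧
      (s = ts ∨ ∀ t ∈ ts, (g t).depth < t.depth) := by
  intro d
  induction d using Nat.strong_induction_on with
  | _ d ih =>
    intro ts s hs
    have hid : s = ts →
        ∃ g : Tm F → Tm F, s = ts.map g ∧ (∀ t ∈ ts, (g t).depth ≤ t.depth) ∧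
          (s = ts ∨ ∀ t ∈ ts, (g t).depth < t.depth) := by
      rintro rfl
      exact ⟨id, (List.map_id _).symm, fun t _ => le_refl _, Or.inl rfl⟩
    cases d with
    | zero =>
      apply hid
      exact (by simpa [deltaAux] using hs : ts = s).symm
    | succ d₁ =>
      by_cases hne : ts = []
      · subst hne
        rw [deltaAux_nil] at hs
        apply hid
        exact (by simpa using hs : _ = s).symm
      by_cases hae : AE ts
      · rw [deltaAux_AE _ _ hne hae] at hs
        simp at hs
      by_cases hc : Cond d₁ ts
      · rw [deltaAux_cond _ _ hne hae hc] at hs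
        have hs' : hc.choose.2.2.2.2 = s := by simpa using hs
        obtain ⟨hts, hlen, hu, hcond⟩ := hc.choose_spec
        obtain ⟨j0, hj0, hnc⟩ := exists_nc_col hne hts hlen hae
        have hcne : ts.map (arg j0) ≠ [] := map_ne_nil hne _
        have hcj := hcond j0 hj0
        rw [col_eq hts j0] at hcj
        rcases hcj with hcj | hcj
        · exact absurd (AE_of_snd_none d₁ _ hcne (by rw [hcj])) hnc
        have hsnd : (deltaAux d₁ (ts.map (arg j0))).2 = some s := by
          rw [hcj, hs']
        obtain ⟨g', hg1, hg2, _⟩ := ih d₁ (by omega) _ _ hsnd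
        refine ⟨g' ∘ arg j0, ?_, ?_, Or.inr ?_⟩
        · rw [hg1, List.map_map]
        · intro t ht
          obtain ⟨a, _, rfl⟩ := mem_decomp hts ht
          exact le_of_lt (lt_of_le_of_lt
            (hg2 _ (List.mem_map_of_mem ht)) (depth_arg_lt _ _ _))
        · intro t ht
          obtain ⟨a, _, rfl⟩ := mem_decomp hts ht
          exact lt_of_le_of_lt (hg2 _ (List.mem_map_of_mem ht)) (depth_arg_lt _ _ _)
      · rw [deltaAux_triv _ _ hne hae hc] at hs
        apply hid
        exact (by simpa using hs : _ = s).symm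

lemma triv_of_snd (d : ℕ) (ts : List (Tm F)) (hne : ts ≠ []) (hnae : ¬ AE ts)
    (hs : (deltaAux (d+1) ts).2 = some ts) : deltaAux (d+1) ts = (Tm.var, some ts) := by
  by_cases hc : Cond d ts
  · exfalso
    rw [deltaAux_cond _ _ hne hnae hc] at hs
    have hs' : hc.choose.2.2.2.2 = ts := by simpa using hs
    obtain ⟨hts, hlen, hu, hcond⟩ := hc.choose_spec
    obtain ⟨j0, hj0, hnc⟩ := exists_nc_col hne hts hlen hnae
    have hcne : ts.map (arg j0) ≠ [] := map_ne_nil hne _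
    have hcj := hcond j0 hj0
    rw [col_eq hts j0] at hcj
    rcases hcj with hcj | hcj
    · exact absurd (AE_of_snd_none d _ hcne (by rw [hcj])) hnc
    have hsnd : (deltaAux d (ts.map (arg j0))).2 = some ts := by
      rw [hcj, hs']
    obtain ⟨g', hg1, hg2, _⟩ := snd_map d _ _ hsnd
    rw [List.map_map] at hg1
    have hpt : ∀ t ∈ ts, id t = (g' ∘ arg j0) t :=
      map_pointwise (by rw [List.map_id, ← hg1])
    have hh := headD_mem hne
    obtain ⟨a, _, he⟩ := mem_decomp hts hh
    have h1 := hpt _ hh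
    have h2 := hg2 _ (List.mem_map_of_mem (f := arg j0) hh)
    have h3 : Tm.depth (arg j0 (ts.headD Tm.var)) < (ts.headD Tm.var).depth := by
      rw [he]; exact depth_arg_lt _ _ _
    simp only [id, Function.comp] at h1
    rw [← h1] at h2
    omega
  · exact deltaAux_triv _ _ hne hnae hc

end DeltaVec

namespace DeltaVec
open scoped Classical

variable {F : Type}

lemma snd_mono : ∀ d' d e (ts ts' : List (Tm F)) (g : Tm F → Tm F) (s' : List (Tm F)),
    ts ≠ [] → (∀ t ∈ ts', Tm.Ground t) → (∀ t ∈ ts, t ∈ ts') →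
    maxD ts + 1 ≤ d → maxD ts' + 1 ≤ d' → maxD (ts.map g) + 1 ≤ e →
    (deltaAux d' ts').2 = some s' → s' = ts'.map g →
    (deltaAux d ts).2 = none ∨ (deltaAux d ts).2 = (deltaAux e (ts.map g)).2 := by
  intro d'
  induction d' using Nat.strong_induction_on with
  | _ d' ih =>
    intro d e ts ts' g s' hne hg' hsub hd hd' he hs' hsg
    have hne' : ts' ≠ [] := by
      intro h
      rw [h] at hsub
      exact absurd (hsub _ (headD_mem hne)) (by simp)
    obtain ⟨d'₁, rfl⟩ : ∃ k, d' = k + 1 := ⟨d' - 1, by omega⟩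
    have hnae' : ¬ AE ts' := by
      intro h
      rw [deltaAux_AE _ _ hne' h] at hs'
      simp at hs'
    -- ts is made of ground terms
    have hg : ∀ t ∈ ts, Tm.Ground t := fun t ht => hg' t (hsub t ht)
    have h1ts : 1 ≤ maxD ts := by
      obtain ⟨f0, a0, h0⟩ := Ground.exists_node (hg _ (headD_mem hne))
      exact one_le_maxD (h0 ▸ headD_mem hne)
    obtain ⟨d₁, rfl⟩ : ∃ k, d = k + 1 := ⟨d - 1, by omega⟩
    have hd₁ : maxD ts ≤ d₁ := by omega
    obtain ⟨d₂, rfl⟩ : ∃ k, d₁ = k + 1 := ⟨d₁ - 1, by omega⟩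
    by_cases hc' : Cond d'₁ ts'
    · -- `ts'` decomposes
      by_cases hae : AE ts
      · left; rw [deltaAux_AE _ _ hne hae]
      right
      rw [deltaAux_cond _ _ hne' hnae' hc'] at hs'
      have hs'c : hc'.choose.2.2.2.2 = s' := by simpa using hs'
      obtain ⟨hts', hlen', hu', hcond'⟩ := hc'.choose_spec
      set f := hc'.choose.1 with hf
      set m := hc'.choose.2.2.1 with hm
      obtain ⟨hts, hlen⟩ := decomp hsub hts' hlen'
      have hcolsub : ∀ j : ℕ, ∀ x ∈ ts.map (arg j), x ∈ ts'.map (arg j) := by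
        intro j x hx
        obtain ⟨t, ht, rfl⟩ := List.mem_map.1 hx
        exact List.mem_map_of_mem (hsub t ht)
      -- the key fact: every non-constant column of `ts` has the same Δ-vector second
      -- component, namely that of `ts.map g`.
      have KEY : ∀ j, j < m → ¬ AE (ts.map (arg j)) →
          (deltaAux (d₂+1) (ts.map (arg j))).2 = (deltaAux e (ts.map g)).2 := by
        intro j hj hnc
        have hcne : ts.map (arg j) ≠ [] := map_ne_nil hne _
        have hcne' : ts'.map (arg j) ≠ [] := map_ne_nil hne' _
        have hnc' : ¬ AE (ts'.map (arg j)) :=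
          fun h => hnc (AE_sub h (hcolsub j) hcne)
        have hcj := hcond' j hj
        rw [col_eq hts' j] at hcj
        rcases hcj with hcj | hcj
        · exact absurd (AE_of_snd_none d'₁ _ hcne' (by rw [hcj])) hnc'
        have hsndj : (deltaAux d'₁ (ts'.map (arg j))).2 = some s' := by
          rw [hcj, hs'c]
        obtain ⟨gj, hgj, -, -⟩ := snd_map d'₁ _ _ hsndj
        have hptw : ∀ t ∈ ts', gj (arg j t) = g t := by
          have : ts'.map (fun t => gj (arg j t)) = ts'.map g := by
            rw [← hsg, hgj, List.map_map]; rfl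
          exact map_pointwise this
        have hcolmap : (ts.map (arg j)).map gj = ts.map g := by
          rw [List.map_map]
          exact List.map_congr_left (fun t ht => hptw t (hsub t ht))
        have hgcol : ∀ x ∈ ts'.map (arg j), Tm.Ground x := by
          intro x hx
          obtain ⟨t, ht, rfl⟩ := List.mem_map.1 hx
          obtain ⟨a, ha, rfl⟩ := mem_decomp hts' ht
          have hla : a.length = m := hlen' a ha
          have : arg j (Tm.node f a) = a.getD j Tm.var := rfl
          rw [this, List.getD_eq_getElem a Tm.var (by omega)]
          exact Ground.args_ground (hg' _ ht) _ (a.getElem_mem _)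
        have hIH := ih d'₁ (by omega) (d₂+1) e (ts.map (arg j)) (ts'.map (arg j)) gj s'
          hcne hgcol (hcolsub j)
          (by have := maxD_col hts hne j; omega)
          (by have := maxD_col hts' hne' j; omega)
          (by rw [hcolmap]; exact he)
          hsndj hgj
        rcases hIH with hIH | hIH
        · exact absurd (AE_of_snd_none _ _ hcne hIH) hnc
        · rw [hIH, hcolmap]
      -- pick a non-constant column to pin down the common second component
      obtain ⟨j1, hj1, hnc1⟩ := exists_nc_col hne hts hlen hae
      obtain ⟨σ, hσ⟩ := snd_some_of_not_AE (d := d₂+1) (map_ne_nil hne _) hnc1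
      have hσe : (deltaAux e (ts.map g)).2 = some σ := by
        rw [← KEY j1 hj1 hnc1, hσ]
      -- build the witness for `ts`
      set u : List (Tm F) :=
        (List.range m).map (fun j => (deltaAux (d₂+1) (ts.map (arg j))).1) with hu_def
      have hu_j : ∀ j, j < m → u.getD j Tm.var = (deltaAux (d₂+1) (ts.map (arg j))).1 := by
        intro j hj
        rw [hu_def, List.getD_eq_getElem _ _ (by simpa using hj)]
        simp
      have hrAt : CondAt (d₂+1) ts (f, ts.map Tm.args, m, u, σ) := by
        refine ⟨hts, hlen, by simp [hu_def], ?_⟩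
        intro j hj
        rw [col_eq hts j, hu_j j hj]
        by_cases hAEj : AE (ts.map (arg j))
        · left
          rw [deltaAux_AE d₂ _ (map_ne_nil hne _) hAEj]
        · right
          refine Prod.ext_iff.mpr ⟨rfl, ?_⟩
          rw [KEY j hj hAEj, hσe]
      have hcts : Cond (d₂+1) ts := ⟨_, hrAt⟩
      rw [deltaAux_cond _ _ hne hae hcts]
      obtain ⟨-, -, hs⟩ := condAt_eq hne hae hcts.choose_spec hrAt
      rw [hσe]
      simpa using hs
    · -- `Δ(ts')` is trivial: then `g` is the identity on the terms of `ts'`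
      rw [deltaAux_triv _ _ hne' hnae' hc'] at hs'
      have hs'ts : s' = ts' := by simpa using hs'.symm
      have hgid : ∀ t ∈ ts', g t = t := by
        have : ts'.map g = ts'.map id := by
          rw [List.map_id, ← hsg, hs'ts]
        intro t ht
        exact map_pointwise this t ht
      have hmg : ts.map g = ts :=
        (List.map_congr_left (fun t ht => hgid t (hsub t ht))).trans (List.map_id ts)
      right
      rw [hmg] at he ⊢
      rw [deltaAux_fuel (d₂+1+1) e ts (by omega) he]
end DeltaVec


open DeltaVec

/-- **triviality of the Δ-vector is monotone.**
Let `T` be a (nonempty) finite sequence of first-order terms.  If `Δ(T) = (α, T)`,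
i.e. the Δ-vector of `T` is trivial, then `Δ(T′) = (α, T′)` for every finite sequence
of terms `T′` that contains all terms of `T`. -/
theorem delta_trivial_monotone {F : Type}
    (T T' : List (Tm F)) (hT : T ≠ []) (hT' : T' ≠ [])
    (hg : ∀ t ∈ T, t.Ground) (hg' : ∀ t ∈ T', t.Ground)
    (hsub : ∀ t ∈ T, t ∈ T')
    (htriv : delta T = (Tm.var, some T)) :
    delta T' = (Tm.var, some T') := by
  have htrivA : deltaAux (maxD T + 1) T = (Tm.var, some T) := htriv
  show deltaAux (maxD T' + 1) T' = (Tm.var, some T')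
  have hnaeT : ¬ AE T := by
    intro h
    rw [deltaAux_AE _ _ hT h] at htrivA
    simpa using congrArg Prod.snd htrivA
  have hnae' : ¬ AE T' := fun h => hnaeT (AE_sub h hsub hT)
  have hsT : (deltaAux (maxD T + 1) T).2 = some T := by rw [htrivA]
  obtain ⟨s', hs'⟩ := snd_some_of_not_AE (d := maxD T' + 1) hT' hnae'
  by_cases hcase : s' = T'
  · exact triv_of_snd (maxD T') T' hT' hnae' (by rw [hs', hcase])
  · exfalso
    obtain ⟨g, hg1, hg2, hg3⟩ := snd_map (maxD T' + 1) T' s' hs'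
    have hstrict : ∀ t ∈ T', (g t).depth < t.depth := hg3.resolve_left hcase
    have hmono := snd_mono (maxD T' + 1) (maxD T + 1) (maxD (T.map g) + 1)
      T T' g s' hT hg' hsub (le_refl _) (le_refl _) (le_refl _) hs' hg1
    rcases hmono with hmono | hmono
    · rw [hsT] at hmono; simp at hmono
    · rw [hsT] at hmono
      obtain ⟨g2, h21, h22, -⟩ := snd_map _ _ _ hmono.symm
      have hptw : ∀ t ∈ T, id t = g2 (g t) := by
        have : T.map id = T.map (fun t => g2 (g t)) := by
          rw [List.map_id]
          conv_lhs => rw [h21]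
          rw [List.map_map]
          simp [Function.comp]
        exact map_pointwise this
      have ht0 := headD_mem hT
      have e1 := hptw _ ht0
      have e2 := h22 _ (List.mem_map_of_mem (f := g) ht0)
      have e3 := hstrict _ (hsub _ ht0)
      simp only [id] at e1
      rw [← e1] at e2
      omega
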